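/- Let ⊗ be the tensor product of a closed symmetric monoidal structure on the category Graph of reflexive graphs, and for a, a' ∈ {s, t} write (a,a') also for the vertex of I_1 ⊗ I_1 that is the image of the morphism (a,a') : I_0 → I_1 ⊗ I_1. Then any two of the four labelled vertices that agree in either coordinate are adjacent in I_1 ⊗ I_1: for each a ∈ {s,t}, (a,s) ∼ (a,t) and (s,a) ∼ (t,a). -/

import Mathlib

open CategoryTheory MonoidalCategory

/-- The category of (reflexive) graphs: an object is a set of vertices with an
irreflexive symmetric adjacency relation. -/
structure GraphCat : Type 1 where
  V : Type
  adj : V → V → Prop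
  symm : ∀ {v w : V}, adj v w → adj w v
  loopless : ∀ v : V, ¬ adj v v

namespace GraphCat

/-- A graph map: whenever `v ∼ w`, either `f v = f w` or `f v ∼ f w`. -/
structure Hom (X Y : GraphCat) where
  toFun : X.V → Y.V
  map_adj : ∀ {v w : X.V}, X.adj v w → toFun v = toFun w ∨ Y.adj (toFun v) (toFun w)

theorem Hom.ext' {X Y : GraphCat} {f g : Hom X Y} (h : f.toFun = g.toFun) : f = g := by
  cases f; cases g; cases h; rfl

instance : Category GraphCat where
  Hom := Hom
  id X := ⟨fun v => v, fun h => Or.inr h⟩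
  comp f g := ⟨fun v => g.toFun (f.toFun v), fun {v w} h => by
    rcases f.map_adj h with h' | h'
    · exact Or.inl (congrArg g.toFun h')
    · exact g.map_adj h'⟩
  id_comp f := Hom.ext' rfl
  comp_id f := Hom.ext' rfl
  assoc f g h := Hom.ext' rfl

/-- The one-vertex graph `I₀`. -/
def I0 : GraphCat := ⟨PUnit, fun _ _ => False, fun h => h, fun _ h => h⟩

/-- The graph `I₁` with two vertices `s = false` and `t = true` joined by an edge. -/
def I1 : GraphCat := ⟨Bool, fun v w => v ≠ w, Ne.symm, fun _ h => h rfl⟩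

/-- The vertex inclusions `s, t : I₀ ⟶ I₁` (`s` for `false`, `t` for `true`). -/
def vert (b : Bool) : I0 ⟶ I1 := ⟨fun _ => b, fun {_ _} h => h.elim⟩

section Labels

variable [MonoidalCategory GraphCat]

/-- Given a monoidal structure on graphs with unit `I₀`, the label morphism
`(a, a') : I₀ ⟶ I₁ ⊗ I₁` for `a, a' ∈ {s, t}` (encoded as booleans, `s = false`,
`t = true`): the composite of the unit isomorphism `I₀ ≅ I₀ ⊗ I₀` with `a ⊗ a'`. -/
def lab (hU : (𝟙_ GraphCat) = I0) (a a' : Bool) : I0 ⟶ (I1 ⊗ I1 : GraphCat) :=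
  eqToHom hU.symm ≫ (λ_ (𝟙_ GraphCat)).inv ≫
    ((eqToHom hU ≫ vert a) ⊗ₘ (eqToHom hU ≫ vert a'))

/-- The vertex of `I₁ ⊗ I₁` labelled `(a, a')`, i.e. the image of the morphism
`lab hU a a'`. -/
def vlab (hU : (𝟙_ GraphCat) = I0) (a a' : Bool) : (I1 ⊗ I1 : GraphCat).V :=
  (lab hU a a').toFun PUnit.unit

end Labels

end GraphCat

open GraphCat

namespace GraphCat

/-- The collapse map `I₁ → I₀`. -/
def qmap : I1 ⟶ I0 := ⟨fun _ => PUnit.unit, fun _ => Or.inl rfl⟩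

section Aux

variable [MonoidalCategory GraphCat] (hU : (𝟙_ GraphCat) = I0)
include hU

theorem unit_hom_eq (f g : (𝟙_ GraphCat) ⟶ (𝟙_ GraphCat)) : f = g := by
  have hsub : Subsingleton ((𝟙_ GraphCat).V) := by
    rw [hU]; exact ⟨fun a b => by cases a; cases b; rfl⟩
  exact Hom.ext' (funext fun x => hsub.elim _ _)

theorem lab_fac₂ (a b : Bool) :
    lab hU a b = vert b ≫ ((λ_ I1).inv ≫ ((eqToHom hU ≫ vert a) ⊗ₘ 𝟙 I1)) := by
  rw [lab]
  have h1 : ((eqToHom hU ≫ vert a) ⊗ₘ (eqToHom hU ≫ vert b))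
      = (𝟙 (𝟙_ GraphCat) ⊗ₘ eqToHom hU) ≫ ((eqToHom hU ≫ vert a) ⊗ₘ vert b) := by
    rw [tensorHom_comp_tensorHom]; simp
  have h2 : ((eqToHom hU ≫ vert a) ⊗ₘ vert b)
      = (𝟙 (𝟙_ GraphCat) ⊗ₘ vert b) ≫ ((eqToHom hU ≫ vert a) ⊗ₘ 𝟙 I1) := by
    rw [tensorHom_comp_tensorHom]; simp
  rw [h1, h2]
  simp only [id_tensorHom]
  rw [leftUnitor_inv_naturality_assoc, leftUnitor_inv_naturality_assoc]
  simp [← MonoidalCategory.whiskerLeft_comp]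

theorem lab_fac₁ (a b : Bool) :
    lab hU a b = vert a ≫ ((ρ_ I1).inv ≫ (𝟙 I1 ⊗ₘ (eqToHom hU ≫ vert b))) := by
  rw [lab]
  have h1 : ((eqToHom hU ≫ vert a) ⊗ₘ (eqToHom hU ≫ vert b))
      = (eqToHom hU ⊗ₘ 𝟙 (𝟙_ GraphCat)) ≫ (vert a ⊗ₘ (eqToHom hU ≫ vert b)) := by
    rw [tensorHom_comp_tensorHom]; simp
  have h2 : (vert a ⊗ₘ (eqToHom hU ≫ vert b))
      = (vert a ⊗ₘ 𝟙 (𝟙_ GraphCat)) ≫ (𝟙 I1 ⊗ₘ (eqToHom hU ≫ vert b)) := by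
    rw [tensorHom_comp_tensorHom]; simp
  rw [h1, h2]
  simp only [tensorHom_id]
  rw [show (λ_ (𝟙_ GraphCat)).inv = (ρ_ (𝟙_ GraphCat)).inv from by
    rw [← unitors_inv_equal]]
  rw [rightUnitor_inv_naturality_assoc, rightUnitor_inv_naturality_assoc]
  simp [← MonoidalCategory.comp_whiskerRight]

theorem lab_proj₂ (a b : Bool) :
    lab hU a b ≫ (((qmap ≫ eqToHom hU.symm) ⊗ₘ 𝟙 I1) ≫ (λ_ I1).hom) = vert b := by
  rw [lab_fac₂ hU a b]
  have h : ((eqToHom hU ≫ vert a) ⊗ₘ 𝟙 I1) ≫ ((qmap ≫ eqToHom hU.symm) ⊗ₘ 𝟙 I1)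
      = 𝟙 (𝟙_ GraphCat ⊗ I1) := by
    rw [tensorHom_comp_tensorHom, Category.comp_id]
    rw [show (eqToHom hU ≫ vert a) ≫ qmap ≫ eqToHom hU.symm = 𝟙 (𝟙_ GraphCat) from
      unit_hom_eq hU _ _]
    exact id_tensorHom_id _ _
  simp only [Category.assoc]
  rw [← Category.assoc ((eqToHom hU ≫ vert a) ⊗ₘ 𝟙 I1), h, Category.id_comp,
    Iso.inv_hom_id, Category.comp_id]

theorem lab_proj₁ (a b : Bool) :
    lab hU a b ≫ ((𝟙 I1 ⊗ₘ (qmap ≫ eqToHom hU.symm)) ≫ (ρ_ I1).hom) = vert a := by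
  rw [lab_fac₁ hU a b]
  have h : (𝟙 I1 ⊗ₘ (eqToHom hU ≫ vert b)) ≫ (𝟙 I1 ⊗ₘ (qmap ≫ eqToHom hU.symm))
      = 𝟙 (I1 ⊗ 𝟙_ GraphCat) := by
    rw [tensorHom_comp_tensorHom, Category.comp_id]
    rw [show (eqToHom hU ≫ vert b) ≫ qmap ≫ eqToHom hU.symm = 𝟙 (𝟙_ GraphCat) from
      unit_hom_eq hU _ _]
    exact id_tensorHom_id _ _
  simp only [Category.assoc]
  rw [← Category.assoc (𝟙 I1 ⊗ₘ (eqToHom hU ≫ vert b)), h, Category.id_comp,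
    Iso.inv_hom_id, Category.comp_id]

theorem vlab_ne₂ (a : Bool) : vlab hU a false ≠ vlab hU a true := by
  intro h
  have h2 : ∀ b : Bool,
      (((qmap ≫ eqToHom hU.symm) ⊗ₘ 𝟙 I1) ≫ (λ_ I1).hom).toFun (vlab hU a b) = b := by
    intro b
    exact congrArg (fun f => Hom.toFun f PUnit.unit) (lab_proj₂ hU a b)
  have := (h2 false).symm.trans ((congrArg _ h).trans (h2 true))
  exact Bool.noConfusion this

theorem vlab_ne₁ (a : Bool) : vlab hU false a ≠ vlab hU true a := by
  intro h
  have h2 : ∀ b : Bool,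
      ((𝟙 I1 ⊗ₘ (qmap ≫ eqToHom hU.symm)) ≫ (ρ_ I1).hom).toFun (vlab hU b a) = b := by
    intro b
    exact congrArg (fun f => Hom.toFun f PUnit.unit) (lab_proj₁ hU b a)
  have := (h2 false).symm.trans ((congrArg _ h).trans (h2 true))
  exact Bool.noConfusion this

end Aux

end GraphCat

/-- Let `⊗` be the tensor product of a closed symmetric monoidal structure on the
category of (reflexive) graphs (whose unit is necessarily `I₀`), and write `(a,a')`
for the vertex of `I₁ ⊗ I₁` labelled `(a,a')`.  Then any two of the four labelled
vertices that agree in either coordinate are adjacent in `I₁ ⊗ I₁`: for each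
`a ∈ {s,t}`, `(a,s) ∼ (a,t)` and `(s,a) ∼ (t,a)`.  (Here `s = false`, `t = true`.) -/
theorem labelled_vertices_adjacent [MonoidalCategory GraphCat] [SymmetricCategory GraphCat]
    [MonoidalClosed GraphCat] (hU : (𝟙_ GraphCat) = I0) :
    ∀ a : Bool,
      (I1 ⊗ I1 : GraphCat).adj (vlab hU a false) (vlab hU a true) ∧
      (I1 ⊗ I1 : GraphCat).adj (vlab hU false a) (vlab hU true a) := by
  intro a
  have hadj : I1.adj false true := Bool.false_ne_true
  constructor
  · -- second coordinate varies: use the factorisation through the first-coordinate map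
    set F : I1 ⟶ (I1 ⊗ I1 : GraphCat) :=
      (λ_ I1).inv ≫ ((eqToHom hU ≫ vert a) ⊗ₘ 𝟙 I1) with hF
    have hv : ∀ b : Bool, vlab hU a b = F.toFun b := by
      intro b
      exact congrArg (fun f => Hom.toFun f PUnit.unit) (lab_fac₂ hU a b)
    rcases F.map_adj hadj with h | h
    · exact absurd ((hv false).trans (h.trans (hv true).symm)) (vlab_ne₂ hU a)
    · rw [hv false, hv true]; exact h
  · set G : I1 ⟶ (I1 ⊗ I1 : GraphCat) :=
      (ρ_ I1).inv ≫ (𝟙 I1 ⊗ₘ (eqToHom hU ≫ vert a)) with hG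
    have hv : ∀ b : Bool, vlab hU b a = G.toFun b := by
      intro b
      exact congrArg (fun f => Hom.toFun f PUnit.unit) (lab_fac₁ hU b a)
    rcases G.map_adj hadj with h | h
    · exact absurd ((hv false).trans (h.trans (hv true).symm)) (vlab_ne₁ hU a)
    · rw [hv false, hv true]; exact h
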